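/- arXiv:0807.1694 — 5 statements merged into one kernel-verified Lean document; each statement's English description precedes it below -/
import Mathlib

section
/- Let F be a nontrivial finite-dimensional complex inner product space and let α > 0. Let X : ℝ × F → F be a time-dependent vector field, 1-periodic in t, such that for all t ∈ ℝ and all x ∈ F with |x| ≥ α one has both |X(t,x) + π·i·x| ≤ α/4 and Re⟨X(t,x), x⟩ = 0. Then every C¹ map γ : ℝ → F with γ(t+1) = γ(t) for all t and γ'(t) = X(t, γ(t)) for all t satisfies |γ(t)| ≤ α for all t. -/
open Real

/-- Fiberwise model of the assertion in Section 2.2 of the paper: for a 1-periodic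
time-dependent vector field `X` satisfying `‖X(t,x) + πi x‖ ≤ α/4` and
`Re⟪X(t,x), x⟫ = 0` whenever `‖x‖ ≥ α`, every 1-periodic integral curve of `X`
stays in the ball `‖x‖ ≤ α`. -/
theorem stmt2
    {F : Type*} [NormedAddCommGroup F] [InnerProductSpace ℂ F]
    [FiniteDimensional ℂ F] [Nontrivial F]
    (α : ℝ) (hα : 0 < α)
    (X : ℝ → F → F)
    (hXper : ∀ (t : ℝ) (x : F), X (t + 1) x = X t x)
    (hX : ∀ (t : ℝ) (x : F), α ≤ ‖x‖ →
      ‖X t x + ((π : ℂ) * Complex.I) • x‖ ≤ α / 4 ∧ (inner ℂ (X t x) x : ℂ).re = 0)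
    (γ : ℝ → F) (hγ : ContDiff ℝ 1 γ)
    (hper : ∀ t, γ (t + 1) = γ t)
    (horbit : ∀ t, deriv γ t = X t (γ t)) :
    ∀ t, ‖γ t‖ ≤ α := by
  by_contra h
  push_neg at h
  obtain ⟨t₀, ht₀⟩ := h
  set c := ‖γ t₀‖ with hc
  have hcα : α < c := ht₀
  -- derivative of γ
  have hd : ∀ t, HasDerivAt γ (X t (γ t)) t := fun t => by
    have := ((hγ.differentiable one_ne_zero) t).hasDerivAt
    rwa [horbit t] at this
  -- squared norm and its derivative
  have hφ : ∀ t, HasDerivAt (fun t => (inner ℂ (γ t) (γ t) : ℂ).re)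
      ((inner ℂ (γ t) (X t (γ t)) + inner ℂ (X t (γ t)) (γ t) : ℂ).re) t := by
    intro t
    have h1 : HasDerivAt (fun t => (inner ℂ (γ t) (γ t) : ℂ))
        (inner ℂ (γ t) (X t (γ t)) + inner ℂ (X t (γ t)) (γ t)) t :=
      (hd t).inner ℂ (hd t)
    exact Complex.reCLM.hasFDerivAt.comp_hasDerivAt t h1
  -- derivative zero when norm ≥ α
  have hzero : ∀ t, α ≤ ‖γ t‖ →
      ((inner ℂ (γ t) (X t (γ t)) + inner ℂ (X t (γ t)) (γ t) : ℂ).re) = 0 := by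
    intro t ht
    have h2 := (hX t (γ t) ht).2
    have h3 : (inner ℂ (γ t) (X t (γ t)) : ℂ).re = (inner ℂ (X t (γ t)) (γ t) : ℂ).re := by
      rw [← inner_conj_symm (γ t) (X t (γ t))]
      exact Complex.conj_re _
    rw [Complex.add_re, h3, h2]
    ring
  -- norm squared relation
  have hnorm : ∀ x : F, (inner ℂ x x : ℂ).re = ‖x‖ ^ 2 := fun x => by
    have := inner_self_eq_norm_sq (𝕜 := ℂ) x
    simpa using this
  have hcont : Continuous fun t => ‖γ t‖ := hγ.continuous.norm
  -- the set where ‖γ‖ = c is clopen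
  have hScl : IsClosed {t : ℝ | ‖γ t‖ = c} :=
    isClosed_eq hcont continuous_const
  have hSop : IsOpen {t : ℝ | ‖γ t‖ = c} := by
    rw [isOpen_iff_mem_nhds]
    intro s hs
    have hγs : ‖γ s‖ = c := hs
    have hmem : (fun t => ‖γ t‖) ⁻¹' Set.Ioi α ∈ nhds s :=
      hcont.continuousAt.preimage_mem_nhds (Ioi_mem_nhds (by rw [hγs]; exact hcα))
    obtain ⟨ε, hε, hball⟩ := Metric.mem_nhds_iff.mp hmem
    refine Filter.mem_of_superset (Metric.ball_mem_nhds s hε) ?_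
    intro t ht
    have hconst : ∀ u ∈ Metric.ball s ε,
        ‖(fun t => (inner ℂ (γ t) (γ t) : ℂ).re) u
          - (fun t => (inner ℂ (γ t) (γ t) : ℂ).re) s‖ ≤ 0 * ‖u - s‖ := by
      intro u hu
      refine (convex_ball s ε).norm_image_sub_le_of_norm_hasDerivWithin_le
        (f' := fun t => ((inner ℂ (γ t) (X t (γ t)) + inner ℂ (X t (γ t)) (γ t) : ℂ).re))
        (fun v hv => (hφ v).hasDerivWithinAt) ?_ (Metric.mem_ball_self hε) hu
      intro v hv
      have hv' : α < ‖γ v‖ := hball hv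
      show ‖(inner ℂ (γ v) (X v (γ v)) + inner ℂ (X v (γ v)) (γ v) : ℂ).re‖ ≤ 0
      rw [hzero v hv'.le]
      simp
    have h0 := hconst t ht
    rw [zero_mul] at h0
    have heq : (inner ℂ (γ t) (γ t) : ℂ).re = (inner ℂ (γ s) (γ s) : ℂ).re := by
      have := norm_sub_eq_zero_iff.mp (le_antisymm h0 (norm_nonneg _))
      simpa using this
    have : ‖γ t‖ ^ 2 = c ^ 2 := by
      rw [← hnorm, heq, hnorm, hγs]
    show ‖γ t‖ = c
    nlinarith [norm_nonneg (γ t), hα.trans hcα]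
  -- hence ‖γ t‖ = c for all t
  have hall : ∀ t, ‖γ t‖ = c := by
    have := IsClopen.eq_univ ⟨hScl, hSop⟩ ⟨t₀, rfl⟩
    intro t
    have ht : t ∈ ({t : ℝ | ‖γ t‖ = c} : Set ℝ) := this ▸ Set.mem_univ t
    exact ht
  -- the rotated curve
  set u : ℝ → F := fun t => Complex.exp ((π : ℂ) * Complex.I * t) • γ t with hu
  have hud : ∀ t : ℝ, HasDerivAt u
      (Complex.exp ((π : ℂ) * Complex.I * (t : ℂ)) •
        (X t (γ t) + ((π : ℂ) * Complex.I) • γ t)) t := by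
    intro t
    have hcexp : HasDerivAt (fun t : ℝ => Complex.exp ((π : ℂ) * Complex.I * t))
        ((π : ℂ) * Complex.I * Complex.exp ((π : ℂ) * Complex.I * t)) t := by
      have h1 : HasDerivAt (fun z : ℂ => Complex.exp ((π : ℂ) * Complex.I * z))
          (Complex.exp ((π : ℂ) * Complex.I * (t : ℂ)) * ((π : ℂ) * Complex.I)) (t : ℂ) :=
        ((hasDerivAt_id (t : ℂ)).const_mul ((π : ℂ) * Complex.I)).cexp.congr_deriv (by simp only [id_eq]; ring)
      have := h1.comp_ofReal
      simpa [mul_comm] using this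
    have := hcexp.smul (hd t)
    convert this using 1
    · rfl
    module
  have hbound : ∀ t : ℝ, ‖Complex.exp ((π : ℂ) * Complex.I * (t : ℂ)) •
      (X t (γ t) + ((π : ℂ) * Complex.I) • γ t)‖ ≤ α / 4 := by
    intro t
    rw [norm_smul]
    have hexp : ‖Complex.exp ((π : ℂ) * Complex.I * t)‖ = 1 := by
      rw [Complex.norm_exp]
      simp
    rw [hexp, one_mul]
    exact (hX t (γ t) (by rw [hall t]; exact hcα.le)).1
  -- mean value inequality on [t₀, t₀+1]
  have hmv : ‖u (t₀ + 1) - u t₀‖ ≤ (α / 4) * ‖(t₀ + 1) - t₀‖ := by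
    refine (convex_univ (𝕜 := ℝ) (E := ℝ)).norm_image_sub_le_of_norm_hasDerivWithin_le
      (f' := fun t : ℝ => Complex.exp ((π : ℂ) * Complex.I * (t : ℂ)) •
        (X t (γ t) + ((π : ℂ) * Complex.I) • γ t))
      (fun v _ => (hud v).hasDerivWithinAt) (fun v _ => hbound v)
      (Set.mem_univ _) (Set.mem_univ _)
  -- compute u (t₀+1) = - u t₀
  have hexp1 : Complex.exp ((π : ℂ) * Complex.I * (↑(t₀ + 1))) =
      - Complex.exp ((π : ℂ) * Complex.I * t₀) := by
    push_cast
    rw [mul_add, Complex.exp_add, mul_one, Complex.exp_pi_mul_I]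
    ring
  have huval : u (t₀ + 1) = - u t₀ := by
    rw [hu]
    simp only
    rw [hper t₀, hexp1, neg_smul]
  rw [huval] at hmv
  have h2c : ‖(-u t₀) - u t₀‖ = 2 * c := by
    have : (-u t₀) - u t₀ = -(2 : ℝ) • u t₀ := by module
    rw [this, norm_smul]
    have : ‖u t₀‖ = c := by
      rw [hu]; simp only [norm_smul]
      rw [Complex.norm_exp]
      simp [hc]
    rw [this]
    simp
  rw [h2c] at hmv
  simp only [add_sub_cancel_left, norm_one, mul_one] at hmv
  linarith
end

section
/- Let N ≥ 1, let V : ℝᴺ → ℝᴺ be a C¹ vector field, let K ⊆ ℝᴺ be compact, let U ⊆ ℝᴺ be an open set containing the zero set {x ∈ ℝᴺ : V(x) = 0}, and let 0 ≤ ρ < 1. Then there is δ₀ > 0 with the following property: if 0 < δ < δ₀ and x : ℝ → ℝᴺ is a C¹ map with x(t+1) = x(t) for all t, with image contained in K, such that (a) x'(t) = δ·V(x(t)) whenever x(t) ∈ U, and (b) ‖x'(t) − δ·V(x(t))‖ ≤ ρ·δ·‖V(x(t))‖ for all t, then x is constant, equal to a point where V vanishes. -/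
open Set Metric
open scoped RealInnerProductSpace


/-- Euclidean-space version of Proposition 3.1 of the paper: for a C¹ vector field
`V` on `ℝᴺ`, a compact set `K`, an open neighborhood `U` of the zero set of `V`, and
`0 ≤ ρ < 1`, there is `δ₀ > 0` such that every 1-periodic C¹ loop contained in `K`
which solves `ẋ = δ V(x)` on `U` and satisfies `‖ẋ − δ V(x)‖ ≤ ρ δ ‖V(x)‖` everywhere,
with `0 < δ < δ₀`, is constant at a zero of `V`. -/
theorem stmt5 (N : ℕ) (hN : 1 ≤ N)
    (V : EuclideanSpace ℝ (Fin N) → EuclideanSpace ℝ (Fin N)) (hV : ContDiff ℝ 1 V)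
    (K : Set (EuclideanSpace ℝ (Fin N))) (hK : IsCompact K)
    (U : Set (EuclideanSpace ℝ (Fin N))) (hU : IsOpen U)
    (hUV : {x | V x = 0} ⊆ U)
    (ρ : ℝ) (hρ0 : 0 ≤ ρ) (hρ1 : ρ < 1) :
    ∃ δ₀ > (0:ℝ), ∀ δ : ℝ, 0 < δ → δ < δ₀ →
      ∀ x : ℝ → EuclideanSpace ℝ (Fin N), ContDiff ℝ 1 x →
        (∀ t, x (t + 1) = x t) → (∀ t, x t ∈ K) →
        (∀ t, x t ∈ U → deriv x t = δ • V (x t)) →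
        (∀ t, ‖deriv x t - δ • V (x t)‖ ≤ ρ * δ * ‖V (x t)‖) →
        ∃ p, V p = 0 ∧ ∀ t, x t = p := by
  -- a closed ball containing K
  obtain ⟨R, hKR⟩ := hK.isBounded.subset_closedBall 0
  set B : Set (EuclideanSpace ℝ (Fin N)) := closedBall (0 : EuclideanSpace ℝ (Fin N)) R
  -- Lipschitz bound for V on B
  obtain ⟨C0, hC0'⟩ := (isCompact_closedBall (0 : EuclideanSpace ℝ (Fin N)) R).exists_bound_of_continuousOn
    ((hV.continuous_fderiv one_ne_zero).continuousOn)
  set C : ℝ := max C0 0 with hCdef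
  have hC0 : 0 ≤ C := le_max_right _ _
  have hC : ∀ y ∈ B, ‖fderiv ℝ V y‖ ≤ C := fun y hy => (hC0' y hy).trans (le_max_left _ _)
  have hLip : ∀ a ∈ B, ∀ b ∈ B, ‖V a - V b‖ ≤ C * ‖a - b‖ := by
    intro a ha b hb
    exact (convex_closedBall _ _).norm_image_sub_le_of_norm_fderiv_le
      (fun y _ => (hV.differentiable one_ne_zero).differentiableAt) hC hb ha
  refine ⟨(1 - ρ) / ((1 + ρ) * (C + 1)), div_pos (by linarith) (by nlinarith), ?_⟩
  intro δ hδ0 hδ1 x hx hper hxK hODE hb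
  have hxd : Differentiable ℝ x := hx.differentiable one_ne_zero
  -- maximum of ‖V ∘ x‖ on [0,1]
  obtain ⟨s, hs01, hmax⟩ := isCompact_Icc.exists_isMaxOn (nonempty_Icc.2 zero_le_one)
    (((hV.continuous).comp hx.continuous).norm.continuousOn (s := Icc (0:ℝ) 1))
  set c : ℝ := ‖V (x s)‖ with hc
  have hperiodic : Function.Periodic x 1 := hper
  have hxt : ∀ t : ℝ, x t = x (Int.fract t) := by
    intro t
    have := hperiodic.sub_int_mul_eq (x := t) ⌊t⌋
    rw [Int.fract]
    simpa using this.symm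
  have hcmax : ∀ t : ℝ, ‖V (x t)‖ ≤ c := by
    intro t
    rw [hxt t]
    exact hmax ⟨Int.fract_nonneg t, le_of_lt (Int.fract_lt_one t)⟩
  rcases eq_or_lt_of_le (norm_nonneg (V (x s))) with hc0 | hc0
  · -- c = 0 : V vanishes along the whole loop, hence x is constant
    have hVz : ∀ t, V (x t) = 0 := fun t =>
      norm_le_zero_iff.1 ((hcmax t).trans (le_of_eq hc0.symm))
    have hder : ∀ t, deriv x t = 0 := by
      intro t
      have := hb t
      rw [hVz t] at this
      simp only [smul_zero, sub_zero, norm_zero, mul_zero] at this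
      exact norm_le_zero_iff.1 this
    exact ⟨x 0, hVz 0, fun t => is_const_of_deriv_eq_zero hxd hder t 0⟩
  · -- c > 0 : derive a contradiction
    exfalso
    have hc0 : 0 < c := hc0
    set v := V (x s) with hv
    -- speed bound
    have hspeed : ∀ t : ℝ, ‖deriv x t‖ ≤ (1 + ρ) * δ * c := by
      intro t
      calc ‖deriv x t‖ ≤ ‖deriv x t - δ • V (x t)‖ + ‖δ • V (x t)‖ := by
            simpa using norm_add_le (deriv x t - δ • V (x t)) (δ • V (x t))
        _ ≤ ρ * δ * ‖V (x t)‖ + δ * ‖V (x t)‖ := by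
            rw [norm_smul, Real.norm_of_nonneg hδ0.le]
            exact add_le_add (hb t) le_rfl
        _ = (1 + ρ) * δ * ‖V (x t)‖ := by ring
        _ ≤ (1 + ρ) * δ * c :=
            mul_le_mul_of_nonneg_left (hcmax t) (mul_nonneg (by linarith) hδ0.le)
    -- diameter bound on [s, s+1]
    have hdiam : ∀ t ∈ Icc s (s + 1), ‖x t - x s‖ ≤ (1 + ρ) * δ * c := by
      intro t ht
      have := norm_image_sub_le_of_norm_deriv_le_segment'
        (f := x) (f' := deriv x) (a := s) (b := s + 1)
        (fun u _ => (hxd u).hasDerivAt.hasDerivWithinAt)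
        (fun u _ => hspeed u) t ht
      have h1 : (1 + ρ) * δ * c * (t - s) ≤ (1 + ρ) * δ * c * 1 := by
        have h2 : t - s ≤ 1 := by linarith [ht.2]
        have : 0 ≤ (1 + ρ) * δ * c := by positivity
        nlinarith
      linarith [this, h1]
    -- the function φ(t) = ⟪x t, v⟫ is strictly increasing on [s, s+1]
    set φ : ℝ → ℝ := fun t => ⟪x t, v⟫ with hφ
    have hφder : ∀ t : ℝ, HasDerivAt φ ⟪deriv x t, v⟫ t := by
      intro t
      have h := (hxd t).hasDerivAt.inner ℝ (hasDerivAt_const t v)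
      simpa using h
    have hvc : ‖v‖ = c := rfl
    have hder_pos : ∀ t ∈ Icc s (s + 1), 0 < ⟪(deriv x t), v⟫ := by
      intro t ht
      have hVt : ‖V (x t) - v‖ ≤ C * ((1 + ρ) * δ * c) := by
        calc ‖V (x t) - v‖ ≤ C * ‖x t - x s‖ :=
              hLip (x t) (hKR (hxK t)) (x s) (hKR (hxK s))
          _ ≤ C * ((1 + ρ) * δ * c) := mul_le_mul_of_nonneg_left (hdiam t ht) hC0
      have hinner1 : ⟪(V (x t)), v⟫ ≥ c ^ 2 - C * ((1 + ρ) * δ * c) * c := by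
        have h1 : ⟪(V (x t) - v), v⟫ = ⟪(V (x t)), v⟫ - ⟪v, v⟫ := by
          rw [inner_sub_left]
        have h2 : ⟪v, v⟫ = c ^ 2 := by
          rw [real_inner_self_eq_norm_sq, hvc]
        have h3 : |⟪(V (x t) - v), v⟫| ≤ ‖V (x t) - v‖ * ‖v‖ := abs_real_inner_le_norm _ _
        have h5 : ‖V (x t) - v‖ * ‖v‖ ≤ C * ((1 + ρ) * δ * c) * c := by
          rw [hvc]; exact mul_le_mul_of_nonneg_right hVt hc0.le
        have h6 := neg_abs_le ⟪(V (x t) - v), v⟫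
        linarith
      have hinner2 : ⟪(deriv x t - δ • V (x t)), v⟫ ≥ -(ρ * δ * c * c) := by
        have h3 : |⟪(deriv x t - δ • V (x t)), v⟫| ≤ ‖deriv x t - δ • V (x t)‖ * ‖v‖ :=
          abs_real_inner_le_norm _ _
        have h4 : ‖deriv x t - δ • V (x t)‖ ≤ ρ * δ * c := by
          refine (hb t).trans ?_
          exact mul_le_mul_of_nonneg_left (hcmax t) (mul_nonneg hρ0 hδ0.le)
        have h5 : ‖deriv x t - δ • V (x t)‖ * ‖v‖ ≤ ρ * δ * c * c := by
          rw [hvc]; exact mul_le_mul_of_nonneg_right h4 hc0.le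
        have h6 := neg_abs_le ⟪(deriv x t - δ • V (x t)), v⟫
        linarith
      have hsplit : ⟪(deriv x t), v⟫ = ⟪(deriv x t - δ • V (x t)), v⟫ + δ * ⟪(V (x t)), v⟫ := by
        rw [inner_sub_left, real_inner_smul_left]; ring
      have hkey : C * (1 + ρ) * δ < 1 - ρ := by
        have hpos : (0:ℝ) < (1 + ρ) * (C + 1) := by nlinarith
        have h1 : δ * ((1 + ρ) * (C + 1)) < 1 - ρ := (lt_div_iff₀ hpos).1 hδ1
        nlinarith [mul_pos hδ0 (show (0:ℝ) < 1 + ρ by linarith)]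
      have hmain : 0 < δ * c * c * (1 - ρ - C * (1 + ρ) * δ) :=
        mul_pos (by positivity) (by linarith)
      rw [hsplit]
      nlinarith [mul_le_mul_of_nonneg_left hinner1 hδ0.le, hinner2, hmain]
    have hmono : StrictMonoOn φ (Icc s (s + 1)) := by
      apply strictMonoOn_of_deriv_pos (convex_Icc _ _)
      · exact (Continuous.inner hx.continuous continuous_const).continuousOn
      · intro t ht
        rw [interior_Icc] at ht
        rw [(hφder t).deriv]
        exact hder_pos t ⟨ht.1.le, ht.2.le⟩
    have h1 : φ s < φ (s + 1) :=
      hmono (left_mem_Icc.2 (by linarith)) (right_mem_Icc.2 (by linarith)) (by linarith)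
    have h2 : φ (s + 1) = φ s := by simp only [hφ]; rw [hper s]
    linarith
end

section
/- Let N ≥ 1 and let V : ℝᴺ → ℝᴺ be Lipschitz with Lipschitz constant C > 0. If x : ℝ → ℝᴺ is a differentiable, nonconstant map satisfying x'(t) = V(x(t)) for all t and x(t + T) = x(t) for all t, where T > 0, then T ≥ 2π/C. -/
open Real

set_option maxHeartbeats 1000000

open MeasureTheory AddCircle Set intervalIntegral Complex
open scoped ENNReal

lemma parseval_cont {T : ℝ} [hT : Fact (0 < T)] (f : C(AddCircle T, ℂ)) :
    Summable (fun n : ℤ => ‖fourierCoeff (⇑f) n‖ ^ 2) ∧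
      ∑' n : ℤ, ‖fourierCoeff (⇑f) n‖ ^ 2 = ∫ t : AddCircle T, ‖f t‖ ^ 2 ∂haarAddCircle := by
  set F := ContinuousMap.toLp (E := ℂ) 2 haarAddCircle ℂ f with hF
  have hcoeff : ∀ n, fourierCoeff (F : AddCircle T → ℂ) n = fourierCoeff (⇑f) n :=
    fourierCoeff_toLp f
  constructor
  · have hmem := lp.memℓp (fourierBasis.repr F)
    have h1 := (memℓp_gen_iff (p := 2) (by norm_num) (f := ⇑(fourierBasis.repr F))).mp hmem
    have h2 : ∀ n : ℤ, ‖fourierBasis.repr F n‖ ^ ((2:ℝ≥0∞).toReal) = ‖fourierCoeff (⇑f) n‖ ^ (2:ℕ) := by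
      intro n
      rw [fourierBasis_repr, hcoeff]
      rw [show ((2:ℝ≥0∞).toReal) = ((2:ℕ):ℝ) by norm_num, Real.rpow_natCast]
    simpa only [h2] using h1
  · have h3 := tsum_sq_fourierCoeff F
    have h4 : ∑' n : ℤ, ‖fourierCoeff (⇑f) n‖ ^ 2 = ∑' n : ℤ, ‖fourierCoeff (F : AddCircle T → ℂ) n‖ ^ 2 := by
      congr 1; ext n; rw [hcoeff]
    rw [h4, h3]
    apply MeasureTheory.integral_congr_ae
    filter_upwards [ContinuousMap.coeFn_toLp (p := 2) haarAddCircle (𝕜 := ℂ) f] with t ht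
    rw [← hF] at ht
    rw [ht]

lemma wirtinger {T : ℝ} (hT : 0 < T) {g g' : ℝ → ℂ}
    (hderiv : ∀ t, HasDerivAt g (g' t) t) (hcont' : Continuous g')
    (hper : Function.Periodic g T) (hper' : Function.Periodic g' T)
    (hmean : ∫ t in (0:ℝ)..T, g t = 0) :
    ∫ t in (0:ℝ)..T, ‖g t‖ ^ 2 ≤ (T / (2 * π)) ^ 2 * ∫ t in (0:ℝ)..T, ‖g' t‖ ^ 2 := by
  haveI : Fact (0 < T) := ⟨hT⟩
  have hcont : Continuous g := continuous_iff_continuousAt.mpr fun t => (hderiv t).continuousAt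
  have h0T : (0:ℝ) < 0 + T := by linarith
  -- continuous lifts to the circle
  have hg0T : g 0 = g T := by rw [← hper 0, zero_add]
  have hg0T' : g' 0 = g' T := by rw [← hper' 0, zero_add]
  set f : C(AddCircle T, ℂ) := ⟨liftIco T 0 g, liftIco_zero_continuous hg0T hcont.continuousOn⟩
    with hf
  set f' : C(AddCircle T, ℂ) := ⟨liftIco T 0 g', liftIco_zero_continuous hg0T' hcont'.continuousOn⟩
    with hf'
  set c : ℤ → ℂ := fun n => fourierCoeffOn h0T g n with hcdef
  set d : ℤ → ℂ := fun n => fourierCoeffOn h0T g' n with hddef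
  have hfc : ∀ n, fourierCoeff (⇑f) n = c n := fun n => fourierCoeff_liftIco_eq g n
  have hfd : ∀ n, fourierCoeff (⇑f') n = d n := fun n => fourierCoeff_liftIco_eq g' n
  -- zeroth coefficient vanishes
  have hc0 : c 0 = 0 := by
    rw [hcdef]
    simp only [fourierCoeffOn_eq_integral, neg_zero, fourier_zero, one_smul, zero_add, sub_zero]
    rw [hmean, smul_zero]
  -- coefficient comparison
  have hnorm : ∀ n : ℤ, ‖c n‖ ^ 2 ≤ (T / (2 * π)) ^ 2 * ‖d n‖ ^ 2 := by
    intro n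
    rcases eq_or_ne n 0 with rfl | hn
    · have hz : ‖c 0‖ ^ 2 = 0 := by simp [hc0]
      rw [hz]
      positivity
    · have hrel := fourierCoeffOn_of_hasDerivAt h0T hn
        (fun t _ => hderiv t) (hcont'.intervalIntegrable 0 (0 + T))
      rw [hper 0] at hrel
      simp only [sub_self, mul_zero, zero_sub] at hrel
      have hle : ‖c n‖ ≤ (T / (2 * π)) * ‖d n‖ := by
        show ‖fourierCoeffOn h0T g n‖ ≤ _
        rw [hrel, norm_mul, norm_neg, norm_mul]
        have hTc : ‖((0 + T : ℝ) : ℂ) - ((0 : ℝ) : ℂ)‖ = T := by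
          rw [← Complex.ofReal_sub, Complex.norm_real, Real.norm_eq_abs,
            show (0:ℝ) + T - 0 = T by ring, abs_of_pos hT]
        have h1 : ‖(1:ℂ) / (-2 * π * I * n)‖ = 1 / (2 * π * |(n:ℝ)|) := by
          rw [norm_div, norm_one]
          congr 1
          rw [show (-2 * (π:ℂ) * I * n) = ((-2 * π : ℝ) : ℂ) * I * ((n:ℝ):ℂ) by push_cast; ring]
          rw [norm_mul, norm_mul, Complex.norm_real, Complex.norm_I, Complex.norm_real,
            Real.norm_eq_abs, Real.norm_eq_abs]
          rw [abs_of_neg (by linarith [pi_pos] : -2 * π < 0)]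
          ring
        rw [h1, hTc]
        have hn1 : (1:ℝ) ≤ |(n:ℝ)| := by
          rw [← Int.cast_abs]
          exact_mod_cast Int.one_le_abs hn
        have hdn : (0:ℝ) ≤ ‖d n‖ := norm_nonneg _
        have hpp : (0:ℝ) < π := pi_pos
        have hdd : ‖fourierCoeffOn h0T g' n‖ = ‖d n‖ := rfl
        rw [hdd, div_mul_eq_mul_div, one_mul,
          div_le_iff₀ (by positivity : (0:ℝ) < 2 * π * |(n:ℝ)|)]
        have hexp : T / (2 * π) * ‖d n‖ * (2 * π * |(n:ℝ)|) = T * ‖d n‖ * |(n:ℝ)| := by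
          field_simp
        rw [hexp]
        nlinarith [mul_le_mul_of_nonneg_left hn1 (mul_nonneg hT.le hdn)]
      calc ‖c n‖ ^ 2 ≤ (T / (2 * π) * ‖d n‖) ^ 2 :=
            pow_le_pow_left₀ (norm_nonneg _) hle 2
        _ = (T / (2 * π)) ^ 2 * ‖d n‖ ^ 2 := by ring
  -- Parseval
  obtain ⟨hsum_c, hpar_c⟩ := parseval_cont f
  obtain ⟨hsum_d, hpar_d⟩ := parseval_cont f'
  simp only [hfc] at hsum_c hpar_c
  simp only [hfd] at hsum_d hpar_d
  -- integrals over the circle vs interval integrals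
  have hcongr : ∀ (h : ℝ → ℂ) (F : C(AddCircle T, ℂ)), (∀ y ∈ Ico (0:ℝ) (0+T), F y = h y) →
      (∫ t in (0:ℝ)..T, ‖h t‖ ^ 2) = T * ∫ z : AddCircle T, ‖F z‖ ^ 2 ∂haarAddCircle := by
    intro h F hFh
    have h2 : (∫ z : AddCircle T, ‖F z‖ ^ 2) =
        T * ∫ z : AddCircle T, ‖F z‖ ^ 2 ∂haarAddCircle := by
      rw [volume_eq_smul_haarAddCircle, MeasureTheory.integral_smul_measure, ENNReal.toReal_ofReal hT.le,
        smul_eq_mul]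
    rw [← h2, ← AddCircle.intervalIntegral_preimage T 0 (fun z => ‖F z‖ ^ 2)]
    rw [zero_add]
    rw [intervalIntegral.integral_of_le hT.le, intervalIntegral.integral_of_le hT.le,
      MeasureTheory.integral_Ioc_eq_integral_Ioo, MeasureTheory.integral_Ioc_eq_integral_Ioo]
    refine (setIntegral_congr_fun measurableSet_Ioo fun y hy => ?_).symm
    rw [hFh y ⟨hy.1.le, by simpa using hy.2⟩]
  have hIg : (∫ t in (0:ℝ)..T, ‖g t‖ ^ 2) = T * ∫ z : AddCircle T, ‖f z‖ ^ 2 ∂haarAddCircle :=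
    hcongr g f fun y hy => liftIco_coe_apply hy
  have hIg' : (∫ t in (0:ℝ)..T, ‖g' t‖ ^ 2) = T * ∫ z : AddCircle T, ‖f' z‖ ^ 2 ∂haarAddCircle :=
    hcongr g' f' fun y hy => liftIco_coe_apply hy
  -- put everything together
  have htsum : ∑' n : ℤ, ‖c n‖ ^ 2 ≤ (T / (2 * π)) ^ 2 * ∑' n : ℤ, ‖d n‖ ^ 2 := by
    rw [← tsum_mul_left]
    exact Summable.tsum_le_tsum hnorm hsum_c (hsum_d.mul_left _)
  rw [hIg, hIg', ← hpar_c, ← hpar_d]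
  calc T * ∑' n : ℤ, ‖c n‖ ^ 2 ≤ T * ((T / (2 * π)) ^ 2 * ∑' n : ℤ, ‖d n‖ ^ 2) :=
        mul_le_mul_of_nonneg_left htsum hT.le
    _ = (T / (2 * π)) ^ 2 * (T * ∑' n : ℤ, ‖d n‖ ^ 2) := by ring

lemma vanish_of_integral_zero {S : ℝ} (hS : 0 < S) {h : ℝ → ℝ} (hc : Continuous h)
    (hnn : ∀ t, 0 ≤ h t) (hint : ∫ t in (0:ℝ)..S, h t = 0) :
    ∀ t ∈ Ioc (0:ℝ) S, h t = 0 := by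
  have hinteg : IntervalIntegrable h volume 0 S := hc.intervalIntegrable 0 S
  have hae : h =ᵐ[volume.restrict (Ioc 0 S)] 0 := by
    have := (intervalIntegral.integral_eq_zero_iff_of_le_of_nonneg_ae hS.le
      (Filter.Eventually.of_forall fun t => hnn t) hinteg).mp hint
    exact this
  have := Measure.eqOn_Ioc_of_ae_eq (volume : Measure ℝ) hae hc.continuousOn
    continuous_const.continuousOn
  exact fun t ht => this ht

lemma halve (N : ℕ) (V : EuclideanSpace ℝ (Fin N) → EuclideanSpace ℝ (Fin N))
    (C : ℝ) (hC : 0 < C) (hLip : LipschitzWith (Real.toNNReal C) V)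
    (x : ℝ → EuclideanSpace ℝ (Fin N)) (hx : Differentiable ℝ x)
    (hode : ∀ t, deriv x t = V (x t))
    (S : ℝ) (hS : 0 < S) (hCS : C * S < 2 * π) (hperS : ∀ t, x (t + S) = x t) :
    ∀ t, x (t + S / 2) = x t := by
  have hxc : Continuous x := hx.continuous
  have hd : ∀ t, HasDerivAt x (V (x t)) t := fun t => hode t ▸ (hx t).hasDerivAt
  set u : ℝ → EuclideanSpace ℝ (Fin N) := fun t => x (t + S / 2) - x t with hudef
  set u' : ℝ → EuclideanSpace ℝ (Fin N) := fun t => V (x (t + S / 2)) - V (x t) with hu'def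
  have hshift : ∀ t : ℝ, HasDerivAt (fun s => x (s + S / 2)) (V (x (t + S / 2))) t := by
    intro t
    have h1 := (hd (t + S / 2)).scomp t ((hasDerivAt_id t).add_const (S / 2))
    simp only [one_smul] at h1
    exact h1
  have hu : ∀ t, HasDerivAt u (u' t) t := fun t => (hshift t).sub (hd t)
  have hVc : Continuous V := hLip.continuous
  have huc : Continuous u := ((hxc.comp (continuous_id.add continuous_const))).sub hxc
  have hu'c : Continuous u' :=
    ((hVc.comp (hxc.comp (continuous_id.add continuous_const)))).sub (hVc.comp hxc)
  have hperu : ∀ t, u (t + S) = u t := by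
    intro t
    simp only [hudef]
    rw [show t + S + S / 2 = t + S / 2 + S by ring, hperS (t + S / 2), hperS t]
  have hperu' : ∀ t, u' (t + S) = u' t := by
    intro t
    simp only [hu'def]
    rw [show t + S + S / 2 = t + S / 2 + S by ring, hperS (t + S / 2), hperS t]
  -- mean zero
  have hmean : (∫ t in (0:ℝ)..S, u t) = 0 := by
    have h1 : IntervalIntegrable (fun t => x (t + S / 2)) volume 0 S :=
      (hxc.comp (continuous_id.add continuous_const)).intervalIntegrable 0 S
    have h2 : IntervalIntegrable x volume 0 S := hxc.intervalIntegrable 0 S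
    rw [hudef]
    rw [intervalIntegral.integral_sub h1 h2]
    have h3 : (∫ t in (0:ℝ)..S, x (t + S / 2)) = ∫ t in (0 + S/2 : ℝ)..(S + S/2), x t :=
      (intervalIntegral.integral_comp_add_right (a := 0) (b := S) x (S/2)).symm ▸ rfl
    have hperx : Function.Periodic x S := hperS
    have h4 : (∫ t in (S/2 : ℝ)..(S/2 + S), x t) = ∫ t in (0:ℝ)..(0 + S), x t :=
      hperx.intervalIntegral_add_eq (S/2) 0
    rw [intervalIntegral.integral_comp_add_right (f := x), show (0:ℝ) + S/2 = S/2 by ring,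
      show S + S/2 = S/2 + S by ring, h4, zero_add, sub_self]
  -- componentwise Wirtinger
  have hnormsq : ∀ y : EuclideanSpace ℝ (Fin N), ‖y‖ ^ 2 = ∑ i, (y i) ^ 2 := by
    intro y
    rw [EuclideanSpace.norm_eq, Real.sq_sqrt (by positivity)]
    exact Finset.sum_congr rfl fun i _ => by rw [Real.norm_eq_abs, _root_.sq_abs]
  have hucomp : ∀ i : Fin N, Continuous fun t => u t i :=
    fun i => (EuclideanSpace.proj (𝕜 := ℝ) i).continuous.comp huc
  have hu'comp : ∀ i : Fin N, Continuous fun t => u' t i :=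
    fun i => (EuclideanSpace.proj (𝕜 := ℝ) i).continuous.comp hu'c
  have hcomp : ∀ i : Fin N,
      (∫ t in (0:ℝ)..S, (u t i) ^ 2) ≤ (S / (2*π))^2 * ∫ t in (0:ℝ)..S, (u' t i) ^ 2 := by
    intro i
    have hgd : ∀ t, HasDerivAt (fun s => ((u s i : ℝ) : ℂ)) ((u' t i : ℝ) : ℂ) t := by
      intro t
      have h5 : HasDerivAt (fun s => u s i) (u' t i) t :=
        (EuclideanSpace.proj (𝕜 := ℝ) i).hasFDerivAt.comp_hasDerivAt t (hu t)
      exact h5.ofReal_comp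
    have hgc' : Continuous fun t => ((u' t i : ℝ) : ℂ) :=
      Complex.continuous_ofReal.comp (hu'comp i)
    have hperg : Function.Periodic (fun t => ((u t i : ℝ) : ℂ)) S := by
      intro t; simp only [hperu t]
    have hperg' : Function.Periodic (fun t => ((u' t i : ℝ) : ℂ)) S := by
      intro t; simp only [hperu' t]
    have hmeang : (∫ t in (0:ℝ)..S, ((u t i : ℝ) : ℂ)) = 0 := by
      rw [intervalIntegral.integral_ofReal]
      have h6 : (∫ t in (0:ℝ)..S, (EuclideanSpace.proj (𝕜 := ℝ) i) (u t)) =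
          (EuclideanSpace.proj (𝕜 := ℝ) i) (∫ t in (0:ℝ)..S, u t) :=
        ContinuousLinearMap.intervalIntegral_comp_comm _ (huc.intervalIntegrable 0 S)

      rw [show (∫ t in (0:ℝ)..S, u t i) =
          ∫ t in (0:ℝ)..S, (EuclideanSpace.proj (𝕜 := ℝ) i) (u t) from rfl, h6, hmean,
        map_zero, Complex.ofReal_zero]
    have hW := wirtinger hS hgd hgc' hperg hperg' hmeang
    have he1 : (∫ t in (0:ℝ)..S, ‖((u t i : ℝ) : ℂ)‖ ^ 2) = ∫ t in (0:ℝ)..S, (u t i) ^ 2 :=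
      intervalIntegral.integral_congr fun t _ => by
        rw [Complex.norm_real, Real.norm_eq_abs, _root_.sq_abs]
    have he2 : (∫ t in (0:ℝ)..S, ‖((u' t i : ℝ) : ℂ)‖ ^ 2) = ∫ t in (0:ℝ)..S, (u' t i) ^ 2 :=
      intervalIntegral.integral_congr fun t _ => by
        rw [Complex.norm_real, Real.norm_eq_abs, _root_.sq_abs]
    rwa [he1, he2] at hW
  -- sum the componentwise inequalities
  have hIu : (∫ t in (0:ℝ)..S, ‖u t‖ ^ 2) = ∑ i, ∫ t in (0:ℝ)..S, (u t i) ^ 2 := by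
    rw [← intervalIntegral.integral_finset_sum
      (fun i _ => (by exact ((hucomp i).pow 2).intervalIntegrable 0 S :
        IntervalIntegrable (fun t => (u t i) ^ 2) volume 0 S))]
    exact intervalIntegral.integral_congr fun t _ => hnormsq (u t)
  have hIu' : (∫ t in (0:ℝ)..S, ‖u' t‖ ^ 2) = ∑ i, ∫ t in (0:ℝ)..S, (u' t i) ^ 2 := by
    rw [← intervalIntegral.integral_finset_sum
      (fun i _ => (by exact ((hu'comp i).pow 2).intervalIntegrable 0 S :
        IntervalIntegrable (fun t => (u' t i) ^ 2) volume 0 S))]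
    exact intervalIntegral.integral_congr fun t _ => hnormsq (u' t)
  have step1 : (∫ t in (0:ℝ)..S, ‖u t‖ ^ 2) ≤
      (S / (2*π))^2 * ∫ t in (0:ℝ)..S, ‖u' t‖ ^ 2 := by
    rw [hIu, hIu', Finset.mul_sum]
    exact Finset.sum_le_sum fun i _ => hcomp i
  -- Lipschitz bound
  have hptw : ∀ t, ‖u' t‖ ^ 2 ≤ C ^ 2 * ‖u t‖ ^ 2 := by
    intro t
    have h7 : dist (V (x (t + S/2))) (V (x t)) ≤ C * dist (x (t + S/2)) (x t) := by
      have := hLip.dist_le_mul (x (t + S/2)) (x t)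
      rwa [Real.coe_toNNReal C hC.le] at this
    rw [dist_eq_norm, dist_eq_norm] at h7
    have h8 : ‖u' t‖ ≤ C * ‖u t‖ := h7
    nlinarith [norm_nonneg (u' t), norm_nonneg (u t)]
  have step2 : (∫ t in (0:ℝ)..S, ‖u' t‖ ^ 2) ≤ C ^ 2 * ∫ t in (0:ℝ)..S, ‖u t‖ ^ 2 := by
    rw [← intervalIntegral.integral_const_mul]
    exact intervalIntegral.integral_mono_on hS.le
      ((hu'c.norm.pow 2).intervalIntegrable 0 S)
      ((continuous_const.mul (huc.norm.pow 2)).intervalIntegrable 0 S)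
      fun t _ => hptw t
  have hIunn : (0:ℝ) ≤ ∫ t in (0:ℝ)..S, ‖u t‖ ^ 2 :=
    intervalIntegral.integral_nonneg hS.le fun t _ => by positivity
  have hq : (S / (2*π))^2 * C ^ 2 < 1 := by
    have hpp : (0:ℝ) < π := pi_pos
    have h9 : 0 ≤ S * C := by positivity
    have : (S / (2*π))^2 * C^2 = ((C * S) / (2*π))^2 := by field_simp
    rw [this]
    have h10 : (C * S) / (2*π) < 1 := (div_lt_one (by positivity)).mpr hCS
    have h11 : 0 ≤ (C * S) / (2*π) := by positivity
    nlinarith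
  have hIzero : (∫ t in (0:ℝ)..S, ‖u t‖ ^ 2) = 0 := by
    have hchain : (∫ t in (0:ℝ)..S, ‖u t‖ ^ 2) ≤
        ((S / (2*π))^2 * C^2) * ∫ t in (0:ℝ)..S, ‖u t‖ ^ 2 := by
      calc (∫ t in (0:ℝ)..S, ‖u t‖ ^ 2) ≤ (S / (2*π))^2 * ∫ t in (0:ℝ)..S, ‖u' t‖ ^ 2 := step1
        _ ≤ (S / (2*π))^2 * (C^2 * ∫ t in (0:ℝ)..S, ‖u t‖ ^ 2) :=
            mul_le_mul_of_nonneg_left step2 (by positivity)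
        _ = ((S / (2*π))^2 * C^2) * ∫ t in (0:ℝ)..S, ‖u t‖ ^ 2 := by ring
    nlinarith
  -- conclude u = 0 on Ioc 0 S, hence everywhere
  have hvan := vanish_of_integral_zero hS (huc.norm.pow 2) (fun t => by show 0 ≤ ‖u t‖ ^ 2; positivity) hIzero
  have huzero : ∀ t, u t = 0 := by
    have hperu2 : Function.Periodic u S := hperu
    intro t
    have hm := toIocMod_mem_Ioc hS 0 t
    rw [zero_add] at hm
    have h12 : u (toIocMod hS 0 t) = u t := by
      have heq : toIocMod hS 0 t = t - toIocDiv hS 0 t • S := rfl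
      rw [heq]
      exact hperu2.sub_zsmul_eq _
    have h13 : ‖u (toIocMod hS 0 t)‖ ^ 2 = 0 := hvan _ hm
    rw [h12] at h13
    have : ‖u t‖ = 0 := by nlinarith [norm_nonneg (u t)]
    exact norm_eq_zero.mp this
  intro t
  have := huzero t
  rw [hudef] at this
  exact sub_eq_zero.mp this

/-- The Yorke estimate (Remark 3.2 of the paper): every nonconstant periodic orbit of a
vector field on `ℝᴺ` which is Lipschitz with constant `C > 0` has period at least `2π/C`. -/
theorem stmt6 (N : ℕ) (hN : 1 ≤ N)
    (V : EuclideanSpace ℝ (Fin N) → EuclideanSpace ℝ (Fin N))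
    (C : ℝ) (hC : 0 < C) (hLip : LipschitzWith (Real.toNNReal C) V)
    (x : ℝ → EuclideanSpace ℝ (Fin N)) (hx : Differentiable ℝ x)
    (hode : ∀ t, deriv x t = V (x t))
    (T : ℝ) (hT : 0 < T) (hper : ∀ t, x (t + T) = x t)
    (hnc : ∃ t₁ t₂, x t₁ ≠ x t₂) :
    2 * π / C ≤ T := by
  by_contra hcon
  push_neg at hcon
  have hCT : C * T < 2 * π := by
    have := (lt_div_iff₀ hC).mp hcon
    linarith
  -- x has period T / 2^n for every n
  have hper2 : ∀ n : ℕ, ∀ t, x (t + T / 2 ^ n) = x t := by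
    intro n
    induction n with
    | zero => simpa using hper
    | succ k ih =>
      have hSk : (0:ℝ) < T / 2 ^ k := by positivity
      have h2k : (1:ℝ) ≤ 2 ^ k := one_le_pow₀ (by norm_num)
      have hle : T / 2 ^ k ≤ T := div_le_self hT.le h2k
      have hCSk : C * (T / 2 ^ k) < 2 * π :=
        lt_of_le_of_lt (mul_le_mul_of_nonneg_left hle hC.le) hCT
      have hh := halve N V C hC hLip x hx hode (T / 2 ^ k) hSk hCSk ih
      intro t
      have h2 : T / 2 ^ (k + 1) = (T / 2 ^ k) / 2 := by
        rw [pow_succ]; ring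
      rw [h2]
      exact hh t
  -- hence x is constant
  obtain ⟨t₁, t₂, hne⟩ := hnc
  have hconst : ∀ t, x t = x 0 := by
    intro t
    have hxc : Continuous x := hx.continuous
    set a : ℕ → ℝ := fun n => t - (⌊t / (T / 2 ^ n)⌋ : ℝ) * (T / 2 ^ n) with ha
    have hxa : ∀ n, x (a n) = x t := by
      intro n
      have hpern : Function.Periodic x (T / 2 ^ n) := hper2 n
      have := hpern.sub_zsmul_eq (x := t) (⌊t / (T / 2 ^ n)⌋)
      simpa [ha, zsmul_eq_mul] using this
    have key : ∀ p : ℝ, 0 < p → 0 ≤ t - (⌊t / p⌋ : ℝ) * p ∧ t - (⌊t / p⌋ : ℝ) * p ≤ p := by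
      intro p hpos
      have h := Int.floor_le (t / p)
      have h' := Int.lt_floor_add_one (t / p)
      have h3 : (⌊t / p⌋ : ℝ) * p ≤ t := by
        calc (⌊t/p⌋:ℝ) * p ≤ (t/p) * p := mul_le_mul_of_nonneg_right h hpos.le
          _ = t := div_mul_cancel₀ t hpos.ne'
      have h4 : t < ((⌊t / p⌋ : ℝ) + 1) * p := by
        calc t = (t/p) * p := (div_mul_cancel₀ t hpos.ne').symm
          _ < ((⌊t / p⌋ : ℝ) + 1) * p := mul_lt_mul_of_pos_right h' hpos
      constructor
      · linarith
      · nlinarith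
    have hbound : ∀ n : ℕ, 0 ≤ a n ∧ a n ≤ T / 2 ^ n := by
      intro n
      have hpos : (0:ℝ) < T / 2 ^ n := by positivity
      simpa [ha] using key (T / 2 ^ n) hpos
    have htend : Filter.Tendsto a Filter.atTop (nhds 0) := by
      have h2 : Filter.Tendsto (fun n : ℕ => T * (1/2:ℝ) ^ n) Filter.atTop (nhds 0) := by
        have := (tendsto_pow_atTop_nhds_zero_of_lt_one
          (by norm_num : (0:ℝ) ≤ 1/2) (by norm_num : (1/2:ℝ) < 1)).const_mul T
        simpa using this
      have h2' : Filter.Tendsto (fun n : ℕ => T / 2 ^ n) Filter.atTop (nhds 0) := by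
        have heq : (fun n : ℕ => T / 2 ^ n) = fun n : ℕ => T * (1/2:ℝ) ^ n := by
          funext n
          rw [div_pow]
          ring
        rw [heq]
        exact h2
      exact squeeze_zero (fun n => (hbound n).1) (fun n => (hbound n).2) h2'
    have hc := (hxc.tendsto 0).comp htend
    have heq : (x ∘ a) = fun _ : ℕ => x t := funext hxa
    rw [heq] at hc
    exact tendsto_nhds_unique tendsto_const_nhds hc
  exact hne (by rw [hconst t₁, hconst t₂])
end

section
/- Let N ≥ 1, let V : ℝᴺ → ℝᴺ be C¹, let A ⊆ ℝᴺ be compact, let K : ℝᴺ → ℝ be continuous, let ρ ∈ ℝ and T₀ > 0. Assume V(x) ≠ 0 for every x ∈ A with K(x) = ρ. Assume that for every ε > 0 there exist τ ∈ (0, T₀] and a nonconstant C¹ map γ : ℝ → ℝᴺ with γ(t+τ) = γ(t) and γ'(t) = V(γ(t)) for all t, whose image is contained in A and satisfies ρ − ε < K(γ(t)) < ρ + ε for all t. Then there exist τ ∈ (0, T₀] and a nonconstant C¹ map γ : ℝ → ℝᴺ with γ(t+τ) = γ(t) and γ'(t) = V(γ(t)) for all t, whose image is contained in A and satisfies K(γ(t))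 = ρ for all t. -/
open Real Set Filter Topology intervalIntegral

lemma gron_two_sided {E : Type*} [NormedAddCommGroup E] [NormedSpace ℝ E]
    {W : E → E} {s : Set E} {L : NNReal}
    (hL : LipschitzOnWith L W s)
    {f g : ℝ → E} (hf : ∀ t, HasDerivAt f (W (f t)) t) (hg : ∀ t, HasDerivAt g (W (g t)) t)
    (hfs : ∀ t, f t ∈ s) (hgs : ∀ t, g t ∈ s) (t : ℝ) :
    dist (f t) (g t) ≤ dist (f 0) (g 0) * Real.exp (L * |t|) := by
  rcases le_total 0 t with ht | ht
  · have := dist_le_of_trajectories_ODE_of_mem (v := fun _ => W) (s := fun _ => s)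
      (K := L) (f := f) (g := g) (a := 0) (b := t) (δ := dist (f 0) (g 0))
      (fun _ _ => hL)
      (fun u _ => (hf u).continuousAt.continuousWithinAt)
      (fun u _ => (hf u).hasDerivWithinAt)
      (fun u _ => hfs u)
      (fun u _ => (hg u).continuousAt.continuousWithinAt)
      (fun u _ => (hg u).hasDerivWithinAt)
      (fun u _ => hgs u) le_rfl t ⟨ht, le_rfl⟩
    simpa [abs_of_nonneg ht] using this
  · set F : ℝ → E := fun u => f (-u) with hF
    set G : ℝ → E := fun u => g (-u) with hG
    have hF' : ∀ u, HasDerivAt F (-W (F u)) u := by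
      intro u
      simpa [hF, Function.comp_def] using ((hf (-u)).scomp u (hasDerivAt_neg u))
    have hG' : ∀ u, HasDerivAt G (-W (G u)) u := by
      intro u
      simpa [hG, Function.comp_def] using ((hg (-u)).scomp u (hasDerivAt_neg u))
    have hLneg : LipschitzOnWith L (fun x => -W x) s := by
      intro x hx y hy
      simpa [edist_neg_neg] using hL hx hy
    have := dist_le_of_trajectories_ODE_of_mem (v := fun _ x => -W x) (s := fun _ => s)
      (K := L) (f := F) (g := G) (a := 0) (b := -t) (δ := dist (F 0) (G 0))
      (fun _ _ => hLneg)
      (fun u _ => (hF' u).continuousAt.continuousWithinAt)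
      (fun u _ => (hF' u).hasDerivWithinAt)
      (fun u _ => hfs (-u))
      (fun u _ => (hG' u).continuousAt.continuousWithinAt)
      (fun u _ => (hG' u).hasDerivWithinAt)
      (fun u _ => hgs (-u)) le_rfl (-t) ⟨by linarith, le_rfl⟩
    simpa [hF, hG, abs_of_nonpos ht] using this

set_option maxHeartbeats 1000000 in
/-- The Arzelà–Ascoli step in the deduction of Theorem 1.1 from Theorem 1.3 of the
paper: if a C¹ vector field `V` on `ℝᴺ` has, for every `ε > 0`, a nonconstant periodic
orbit of period at most `T₀` contained in the compact set `A` and in the energy window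
`ρ − ε < K < ρ + ε`, and `V` does not vanish on `A ∩ {K = ρ}`, then `V` has a
nonconstant periodic orbit of period at most `T₀` contained in `A` and lying on the
level `K = ρ`. -/
theorem stmt10 (N : ℕ) (hN : 1 ≤ N)
    (V : EuclideanSpace ℝ (Fin N) → EuclideanSpace ℝ (Fin N)) (hV : ContDiff ℝ 1 V)
    (A : Set (EuclideanSpace ℝ (Fin N))) (hA : IsCompact A)
    (K : EuclideanSpace ℝ (Fin N) → ℝ) (hK : Continuous K)
    (ρ T₀ : ℝ) (hT₀ : 0 < T₀)
    (hnz : ∀ x ∈ A, K x = ρ → V x ≠ 0)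
    (horbits : ∀ ε > (0:ℝ), ∃ τ : ℝ, 0 < τ ∧ τ ≤ T₀ ∧
      ∃ γ : ℝ → EuclideanSpace ℝ (Fin N),
        ContDiff ℝ 1 γ ∧ (∃ t₁ t₂, γ t₁ ≠ γ t₂) ∧
        (∀ t, γ (t + τ) = γ t) ∧ (∀ t, deriv γ t = V (γ t)) ∧
        (∀ t, γ t ∈ A) ∧ (∀ t, ρ - ε < K (γ t) ∧ K (γ t) < ρ + ε)) :
    ∃ τ : ℝ, 0 < τ ∧ τ ≤ T₀ ∧
      ∃ γ : ℝ → EuclideanSpace ℝ (Fin N),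
        ContDiff ℝ 1 γ ∧ (∃ t₁ t₂, γ t₁ ≠ γ t₂) ∧
        (∀ t, γ (t + τ) = γ t) ∧ (∀ t, deriv γ t = V (γ t)) ∧
        (∀ t, γ t ∈ A) ∧ (∀ t, K (γ t) = ρ) := by
  classical
  have H : ∀ n : ℕ, ∃ τ : ℝ, 0 < τ ∧ τ ≤ T₀ ∧
      ∃ γ : ℝ → EuclideanSpace ℝ (Fin N), ContDiff ℝ 1 γ ∧ (∃ t₁ t₂, γ t₁ ≠ γ t₂) ∧
        (∀ t, γ (t + τ) = γ t) ∧ (∀ t, deriv γ t = V (γ t)) ∧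
        (∀ t, γ t ∈ A) ∧
        (∀ t, ρ - 1/((n:ℝ)+1) < K (γ t) ∧ K (γ t) < ρ + 1/((n:ℝ)+1)) :=
    fun n => horbits (1/((n:ℝ)+1)) (by positivity)
  choose τs hτ0 hτT γs hC1 hnc hper hder hmem hband using H
  have hderAt : ∀ n t, HasDerivAt (γs n) (V (γs n t)) t := by
    intro n t
    have h := ((hC1 n).differentiable one_ne_zero t).hasDerivAt
    rwa [hder n t] at h
  -- Lipschitz constant of V on a big ball
  obtain ⟨R, hR0, hAR⟩ := hA.isBounded.subset_closedBall_lt 0 0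
  set B : Set (EuclideanSpace ℝ (Fin N)) := Metric.closedBall 0 R with hBdef
  have hBcomp : IsCompact B := isCompact_closedBall 0 R
  obtain ⟨C, hC⟩ := hBcomp.exists_bound_of_continuousOn
    ((hV.continuous_fderiv one_ne_zero).continuousOn)
  set L : NNReal := C.toNNReal with hLdef
  have hLip : LipschitzOnWith L V B := by
    refine Convex.lipschitzOnWith_of_nnnorm_hasFDerivWithin_le
      (f' := fun x => fderiv ℝ V x)
      (fun x _ => ((hV.differentiable one_ne_zero x).hasFDerivAt).hasFDerivWithinAt)
      (fun x hx => ?_) (convex_closedBall 0 R)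
    have h1 := hC x hx
    rw [← Real.toNNReal_coe (r := ‖fderiv ℝ V x‖₊)]
    exact Real.toNNReal_mono (by rw [coe_nnnorm]; exact h1)
  -- bound on V over A
  obtain ⟨M, hM⟩ := hA.exists_bound_of_continuousOn hV.continuous.continuousOn
  set M0 : ℝ := max M 0 with hM0def
  have hM0 : 0 ≤ M0 := le_max_right _ _
  have hγLipn : ∀ n a b, dist (γs n a) (γs n b) ≤ M0 * dist a b := by
    intro n a b
    have := Convex.norm_image_sub_le_of_norm_hasDerivWithin_le
      (f := γs n) (f' := fun t => V (γs n t)) (s := univ) (C := M0)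
      (fun t _ => (hderAt n t).hasDerivWithinAt)
      (fun t _ => le_trans (hM _ (hmem n t)) (le_max_left _ _))
      convex_univ (mem_univ b) (mem_univ a)
    simpa [dist_eq_norm, Real.dist_eq, abs_sub_comm] using this
  -- subsequence
  have hq : ∀ n : ℕ, (τs n, γs n 0) ∈ (Icc (0:ℝ) T₀) ×ˢ A :=
    fun n => ⟨⟨(hτ0 n).le, hτT n⟩, hmem n 0⟩
  obtain ⟨⟨τ, p⟩, hτp, φ, hφ, hconv⟩ := (isCompact_Icc.prod hA).tendsto_subseq hq
  have hτconv : Tendsto (fun n => τs (φ n)) atTop (𝓝 τ) :=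
    (continuous_fst.tendsto (τ, p)).comp hconv
  have hpconv : Tendsto (fun n => γs (φ n) 0) atTop (𝓝 p) :=
    (continuous_snd.tendsto (τ, p)).comp hconv
  have hpA : p ∈ A := hτp.2
  have hτmem : τ ∈ Icc (0:ℝ) T₀ := hτp.1
  -- Gronwall estimate between orbits
  have hest : ∀ m n t, dist (γs m t) (γs n t) ≤ dist (γs m 0) (γs n 0) * Real.exp (L * |t|) :=
    fun m n t => gron_two_sided hLip (hderAt m) (hderAt n)
      (fun u => hAR (hmem m u)) (fun u => hAR (hmem n u)) t
  -- Cauchy and limit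
  have hCauchy : ∀ t, CauchySeq (fun n => γs (φ n) t) := by
    intro t
    rw [Metric.cauchySeq_iff]
    intro ε hε
    have hc : (0:ℝ) < Real.exp (L * |t|) := Real.exp_pos _
    obtain ⟨Nn, hN⟩ := Metric.cauchySeq_iff.1 hpconv.cauchySeq
      (ε / Real.exp (L * |t|)) (by positivity)
    refine ⟨Nn, fun m hm n hn => lt_of_le_of_lt (hest _ _ t) ?_⟩
    have h1 := hN m hm n hn
    calc dist (γs (φ m) 0) (γs (φ n) 0) * Real.exp (L * |t|)
        < (ε / Real.exp (L * |t|)) * Real.exp (L * |t|) :=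
          mul_lt_mul_of_pos_right h1 hc
      _ = ε := div_mul_cancel₀ ε hc.ne'
  set γ : ℝ → EuclideanSpace ℝ (Fin N) := fun t => limUnder atTop (fun n => γs (φ n) t) with hγdef
  have htend : ∀ t, Tendsto (fun n => γs (φ n) t) atTop (𝓝 (γ t)) :=
    fun t => (hCauchy t).tendsto_limUnder
  have hγ0 : γ 0 = p := tendsto_nhds_unique (htend 0) hpconv
  have hmemγ : ∀ t, γ t ∈ A := fun t =>
    hA.isClosed.mem_of_tendsto (htend t) (Eventually.of_forall fun n => hmem _ t)
  -- epsilon tends to zero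
  have hεconv : Tendsto (fun n : ℕ => 1/((φ n : ℝ)+1)) atTop (𝓝 0) :=
    tendsto_one_div_add_atTop_nhds_zero_nat.comp hφ.tendsto_atTop
  -- exact energy level
  have hKγ : ∀ t, K (γ t) = ρ := by
    intro t
    have hKt : Tendsto (fun n => K (γs (φ n) t)) atTop (𝓝 (K (γ t))) :=
      (hK.tendsto _).comp (htend t)
    have h1 : K (γ t) ≤ ρ := by
      have hg : Tendsto (fun n : ℕ => ρ + 1/((φ n : ℝ)+1)) atTop (𝓝 (ρ + 0)) :=
        tendsto_const_nhds.add hεconv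
      rw [add_zero] at hg
      exact le_of_tendsto_of_tendsto' hKt hg (fun n => (hband (φ n) t).2.le)
    have h2 : ρ ≤ K (γ t) := by
      have hg : Tendsto (fun n : ℕ => ρ - 1/((φ n : ℝ)+1)) atTop (𝓝 (ρ - 0)) :=
        tendsto_const_nhds.sub hεconv
      rw [sub_zero] at hg
      exact le_of_tendsto_of_tendsto' hg hKt (fun n => (hband (φ n) t).1.le)
    linarith
  -- Lipschitz for γ and continuity
  have hγLip : ∀ a b, dist (γ a) (γ b) ≤ M0 * dist a b := fun a b =>
    le_of_tendsto ((htend a).dist (htend b))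
      (Eventually.of_forall fun n => hγLipn (φ n) a b)
  have hγcont : Continuous γ := by
    refine LipschitzWith.continuous (K := M0.toNNReal) ?_
    refine LipschitzWith.of_dist_le_mul fun a b => ?_
    refine le_trans (hγLip a b) ?_
    rw [Real.coe_toNNReal M0 hM0]
  have hVγcont : Continuous fun s => V (γ s) := hV.continuous.comp hγcont
  -- integral equation for each orbit
  have hfun : ∀ n t, γs n t = γs n 0 + ∫ s in (0:ℝ)..t, V (γs n s) := by
    intro n t
    have hcontV : Continuous fun s => V (γs n s) := hV.continuous.comp (hC1 n).continuous
    have h := intervalIntegral.integral_eq_sub_of_hasDerivAt (f := γs n)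
      (f' := fun u => V (γs n u)) (a := 0) (b := t)
      (fun u _ => hderAt n u) (hcontV.intervalIntegrable 0 t)
    rw [h]; abel
  -- integral equation in the limit
  have hintγ : ∀ t, γ t = p + ∫ s in (0:ℝ)..t, V (γ s) := by
    intro t
    refine tendsto_nhds_unique (htend t) ?_
    have heq : (fun n => γs (φ n) t)
        = fun n => γs (φ n) 0 + ∫ s in (0:ℝ)..t, V (γs (φ n) s) :=
      funext fun n => hfun (φ n) t
    rw [heq]
    refine hpconv.add ?_
    rw [tendsto_iff_dist_tendsto_zero]
    have hd0 : Tendsto (fun n => dist (γs (φ n) 0) p) atTop (𝓝 0) :=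
      tendsto_iff_dist_tendsto_zero.1 hpconv
    refine squeeze_zero (fun n => dist_nonneg)
      (g := fun n => ((L : ℝ) * Real.exp (L * |t|) * dist (γs (φ n) 0) p) * |t|) ?_ ?_
    · intro n
      have hcn : Continuous fun s : ℝ => V (γs (φ n) s) :=
        hV.continuous.comp (hC1 (φ n)).continuous
      have hsub : dist (∫ s in (0:ℝ)..t, V (γs (φ n) s)) (∫ s in (0:ℝ)..t, V (γ s))
          = ‖∫ s in (0:ℝ)..t, (V (γs (φ n) s) - V (γ s))‖ := by
        rw [dist_eq_norm, ← intervalIntegral.integral_sub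
          (hcn.intervalIntegrable 0 t)
          (hVγcont.intervalIntegrable 0 t)]
      rw [hsub]
      have hb : ∀ s ∈ Set.uIoc (0:ℝ) t, ‖V (γs (φ n) s) - V (γ s)‖
          ≤ (L : ℝ) * Real.exp (L * |t|) * dist (γs (φ n) 0) p := by
        intro s hs
        have hst : |s| ≤ |t| := by
          obtain ⟨hs1, hs2⟩ := hs
          rw [abs_le]
          constructor
          · calc -|t| ≤ min 0 t := le_min (by simp [abs_nonneg]) (neg_abs_le t)
              _ ≤ s := hs1.le
          · exact hs2.trans (max_le (abs_nonneg t) (le_abs_self t))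
        have h2 : dist (γs (φ n) s) (γ s) ≤ dist (γs (φ n) 0) p * Real.exp (L * |s|) := by
          refine le_of_tendsto_of_tendsto'
            ((tendsto_const_nhds (x := γs (φ n) s)).dist (htend s))
            (((tendsto_const_nhds (x := γs (φ n) 0)).dist hpconv).mul_const _)
            (fun m => hest (φ n) (φ m) s)
        have h1 : dist (V (γs (φ n) s)) (V (γ s)) ≤ (L : ℝ) * dist (γs (φ n) s) (γ s) :=
          hLip.dist_le_mul _ (hAR (hmem _ s)) _ (hAR (hmemγ s))
        rw [← dist_eq_norm]
        calc dist (V (γs (φ n) s)) (V (γ s))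
            ≤ (L : ℝ) * (dist (γs (φ n) 0) p * Real.exp (L * |s|)) := by
              refine h1.trans ?_
              exact mul_le_mul_of_nonneg_left h2 L.coe_nonneg
          _ ≤ (L : ℝ) * Real.exp (L * |t|) * dist (γs (φ n) 0) p := by
              have hexp : Real.exp (L * |s|) ≤ Real.exp (L * |t|) :=
                Real.exp_le_exp.2 (mul_le_mul_of_nonneg_left hst L.coe_nonneg)
              have hd : (0:ℝ) ≤ dist (γs (φ n) 0) p := dist_nonneg
              calc (L : ℝ) * (dist (γs (φ n) 0) p * Real.exp (L * |s|))
                  ≤ (L : ℝ) * (dist (γs (φ n) 0) p * Real.exp (L * |t|)) :=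
                    mul_le_mul_of_nonneg_left
                      (mul_le_mul_of_nonneg_left hexp hd) L.coe_nonneg
                _ = (L : ℝ) * Real.exp (L * |t|) * dist (γs (φ n) 0) p := by ring
      have := intervalIntegral.norm_integral_le_of_norm_le_const hb
      simpa [sub_zero] using this
    · have : Tendsto (fun n => ((L : ℝ) * Real.exp (L * |t|) * dist (γs (φ n) 0) p) * |t|)
          atTop (𝓝 (((L : ℝ) * Real.exp (L * |t|) * 0) * |t|)) :=
        ((hd0.const_mul _).mul_const _)
      simpa using this
  -- derivative of γ
  have hderγ : ∀ t, HasDerivAt γ (V (γ t)) t := by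
    intro t
    have h2 := intervalIntegral.integral_hasDerivAt_right (f := fun s => V (γ s))
      (a := 0) (b := t)
      (hVγcont.intervalIntegrable 0 t)
      hVγcont.aestronglyMeasurable.stronglyMeasurableAtFilter
      hVγcont.continuousAt
    have h1 : HasDerivAt (fun u => p + ∫ s in (0:ℝ)..u, V (γ s)) (V (γ t)) t :=
      h2.const_add p
    exact h1.congr_of_eventuallyEq (Eventually.of_forall fun u => hintγ u)
  have hdiffγ : Differentiable ℝ γ := fun t => (hderγ t).differentiableAt
  have hderiv_eq : ∀ t, deriv γ t = V (γ t) := fun t => (hderγ t).deriv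
  have hC1γ : ContDiff ℝ 1 γ := by
    rw [contDiff_one_iff_deriv]
    exact ⟨hdiffγ, by
      have : deriv γ = fun t => V (γ t) := funext hderiv_eq
      rw [this]; exact hVγcont⟩
  have hVp : V p ≠ 0 := hnz p hpA (by rw [← hγ0]; exact hKγ 0)
  -- nonconstant
  have hncγ : ∃ t₁ t₂, γ t₁ ≠ γ t₂ := by
    by_contra h
    push_neg at h
    have hconst : γ = fun _ => γ 0 := funext fun t => h t 0
    have hd0 : HasDerivAt γ 0 0 := by
      rw [hconst]; exact hasDerivAt_const _ _
    have := (hderγ 0).unique hd0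
    rw [hγ0] at this
    exact hVp this
  -- periodicity of γ
  have hperγ : ∀ t, γ (t + τ) = γ t := by
    intro t
    refine tendsto_nhds_unique (htend (t + τ)) ?_
    rw [tendsto_iff_dist_tendsto_zero]
    refine squeeze_zero (fun n => dist_nonneg)
      (g := fun n => M0 * |τ - τs (φ n)| + dist (γs (φ n) t) (γ t)) ?_ ?_
    · intro n
      have e1 : γs (φ n) (t + τs (φ n)) = γs (φ n) t := hper (φ n) t
      calc dist (γs (φ n) (t + τ)) (γ t)
          ≤ dist (γs (φ n) (t + τ)) (γs (φ n) (t + τs (φ n)))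
            + dist (γs (φ n) (t + τs (φ n))) (γ t) := dist_triangle _ _ _
        _ ≤ M0 * |τ - τs (φ n)| + dist (γs (φ n) t) (γ t) := by
            refine add_le_add ?_ (le_of_eq (by rw [e1]))
            refine (hγLipn (φ n) (t + τ) (t + τs (φ n))).trans ?_
            rw [Real.dist_eq]
            have he : t + τ - (t + τs (φ n)) = τ - τs (φ n) := by ring
            rw [he]
    · have h1 : Tendsto (fun n => |τ - τs (φ n)|) atTop (𝓝 0) := by
        have := (tendsto_const_nhds (x := τ)).sub hτconv
        rw [sub_self] at this
        simpa [abs_zero] using this.abs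
      have h2 : Tendsto (fun n => dist (γs (φ n) t) (γ t)) atTop (𝓝 0) :=
        tendsto_iff_dist_tendsto_zero.1 (htend t)
      have := (h1.const_mul M0).add h2
      simpa using this
  -- positivity of τ
  have hτpos : 0 < τ := by
    rcases hτmem.1.lt_or_eq with h | h
    · exact h
    · exfalso
      have hconst : ∀ t, γ t = p := by
        intro t
        have key : ∀ n, dist (γs (φ n) t) (γs (φ n) 0) ≤ M0 * τs (φ n) := by
          intro n
          set k : ℤ := ⌊t / τs (φ n)⌋ with hk
          have hper' : Function.Periodic (γs (φ n)) (τs (φ n)) := hper (φ n)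
          have h1 : γs (φ n) t = γs (φ n) (t - (k : ℝ) * τs (φ n)) :=
            (hper'.sub_int_mul_eq k).symm
          have h2 : 0 ≤ t - (k : ℝ) * τs (φ n) :=
            Int.sub_floor_div_mul_nonneg t (hτ0 (φ n))
          have h3 : t - (k : ℝ) * τs (φ n) < τs (φ n) :=
            Int.sub_floor_div_mul_lt t (hτ0 (φ n))
          rw [h1]
          refine (hγLipn (φ n) _ 0).trans ?_
          rw [Real.dist_eq, sub_zero, abs_of_nonneg h2]
          exact mul_le_mul_of_nonneg_left h3.le hM0
        have hdt : Tendsto (fun n => dist (γs (φ n) t) (γs (φ n) 0)) atTop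
            (𝓝 (dist (γ t) p)) := (htend t).dist hpconv
        have hrt : Tendsto (fun n => M0 * τs (φ n)) atTop (𝓝 (M0 * τ)) :=
          hτconv.const_mul M0
        have hle := le_of_tendsto_of_tendsto' hdt hrt key
        rw [← h, mul_zero] at hle
        exact dist_le_zero.1 hle
      have hγconst : γ = fun _ => p := funext hconst
      have hd0 : HasDerivAt γ 0 0 := by rw [hγconst]; exact hasDerivAt_const _ _
      have := (hderγ 0).unique hd0
      rw [hγ0] at this
      exact hVp this
  exact ⟨τ, hτpos, hτmem.2, γ, hC1γ, hncγ, hperγ, hderiv_eq, hmemγ, hKγ⟩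
end

section
/- Let ρ > 0, let 0 < C₁ ≤ C₂, and let η > 0 with C₂·η < 4π. Let f : [0,∞) → ℝ be C² with f′(s) > 0 for all s, and suppose: f(s) = C₂·η·s for 0 ≤ s ≤ ρ/C₂; f(2ρ/C₂) = 30πρ/C₁; f″(s) > 0 for ρ/C₂ < s < 4ρ/(3C₂); f″(s) < 0 for 5ρ/(3C₂) < s < 2ρ/C₂; f′(s) ∉ 4πℤ for 4ρ/(3C₂) ≤ s ≤ 5ρ/(3C₂); and f′(s) < 4π for all s ≥ 2ρ/C₂. Then there is a unique ℓ_a > 0 with f′(ℓ_a) = 4π and f″(ℓ_a) < 0; it satisfies 5ρ/(3C₂) < ℓ_a < 2ρ/C₂, as well as f(ℓ_a) ≥ 30πρ/C₁ − 4πρ/(3C₂), and −30πρ/C₁ < 4π·ℓ_a − f(ℓ_a) < −20πρ/C₁. -/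
open Real

set_option maxHeartbeats 1000000 in
/-- Properties of the profile function `f_a` from Section 4 of the paper: under the
listed hypotheses there is a unique `ℓ_a > 0` with `f′(ℓ_a) = 4π` and `f″(ℓ_a) < 0`; it
satisfies `5ρ/(3C₂) < ℓ_a < 2ρ/C₂`, `f(ℓ_a) ≥ 30πρ/C₁ − 4πρ/(3C₂)`, and
`−30πρ/C₁ < 4πℓ_a − f(ℓ_a) < −20πρ/C₁`. -/
theorem stmt11 (ρ C₁ C₂ η : ℝ) (hρ : 0 < ρ) (hC₁ : 0 < C₁) (hC₁₂ : C₁ ≤ C₂)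
    (hη : 0 < η) (hη4 : C₂ * η < 4 * π)
    (f : ℝ → ℝ) (hf : ContDiff ℝ 2 f)
    (hf' : ∀ s : ℝ, 0 ≤ s → 0 < deriv f s)
    (hlin : ∀ s ∈ Set.Icc (0:ℝ) (ρ / C₂), f s = C₂ * η * s)
    (hval : f (2 * ρ / C₂) = 30 * π * ρ / C₁)
    (hconv : ∀ s ∈ Set.Ioo (ρ / C₂) (4 * ρ / (3 * C₂)), 0 < deriv (deriv f) s)
    (hconc : ∀ s ∈ Set.Ioo (5 * ρ / (3 * C₂)) (2 * ρ / C₂), deriv (deriv f) s < 0)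
    (hnores : ∀ s ∈ Set.Icc (4 * ρ / (3 * C₂)) (5 * ρ / (3 * C₂)),
      ¬ ∃ k : ℤ, deriv f s = 4 * π * k)
    (hlt : ∀ s : ℝ, 2 * ρ / C₂ ≤ s → deriv f s < 4 * π) :
    ∃ ℓa : ℝ, (0 < ℓa ∧ deriv f ℓa = 4 * π ∧ deriv (deriv f) ℓa < 0) ∧
      (∀ ℓ : ℝ, 0 < ℓ → deriv f ℓ = 4 * π → deriv (deriv f) ℓ < 0 → ℓ = ℓa) ∧
      5 * ρ / (3 * C₂) < ℓa ∧ ℓa < 2 * ρ / C₂ ∧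
      30 * π * ρ / C₁ - 4 * π * ρ / (3 * C₂) ≤ f ℓa ∧
      -(30 * π * ρ / C₁) < 4 * π * ℓa - f ℓa ∧
      4 * π * ℓa - f ℓa < -(20 * π * ρ / C₁) := by
  have hπ : (0:ℝ) < π := Real.pi_pos
  have hC₂ : 0 < C₂ := lt_of_lt_of_le hC₁ hC₁₂
  set p := ρ / C₂ with hp
  set q := 4 * ρ / (3 * C₂) with hq
  set r := 5 * ρ / (3 * C₂) with hr
  set t := 2 * ρ / C₂ with ht
  have hp0 : 0 < p := by rw [hp]; positivity
  have hq0 : 0 < q := by rw [hq]; positivity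
  have hr0 : 0 < r := by rw [hr]; positivity
  have hpq : p < q := by rw [hp, hq, div_lt_div_iff₀ hC₂ (by positivity)]; nlinarith
  have hqr : q < r := by rw [hq, hr, div_lt_div_iff₀ (by positivity) (by positivity)]; nlinarith
  have hrt : r < t := by rw [hr, ht, div_lt_div_iff₀ (by positivity) hC₂]; nlinarith
  have hpt : p < t := hpq.trans (hqr.trans hrt)
  have htp : t - p = p := by rw [ht, hp]; ring
  have hcont : Continuous f := hf.continuous
  have hdf : Continuous (deriv f) := hf.continuous_deriv one_le_two
  have hdiff : Differentiable ℝ f := hf.differentiable two_ne_zero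
  have hdivle : ρ / C₂ ≤ ρ / C₁ := div_le_div_of_nonneg_left hρ.le hC₁ hC₁₂
  -- derivative on the linear part
  have hderiv_lin : ∀ s ∈ Set.Icc (0:ℝ) p, deriv f s = C₂ * η := by
    have hIoo : Set.EqOn (deriv f) (fun _ => C₂ * η) (Set.Ioo (0:ℝ) p) := by
      intro s hs
      have hev : f =ᶠ[nhds s] fun x => C₂ * η * x :=
        Filter.eventuallyEq_of_mem (Ioo_mem_nhds hs.1 hs.2)
          (fun x hx => hlin x ⟨hx.1.le, hx.2.le⟩)
      rw [hev.deriv_eq]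
      simpa using (((hasDerivAt_id s).const_mul (C₂ * η)).deriv)
    intro s hs
    have hcl := hIoo.closure hdf continuous_const
    exact hcl (by rwa [closure_Ioo hp0.ne])
  have hnores' : ∀ s ∈ Set.Icc q r, deriv f s ≠ 4 * π := by
    intro s hs h
    exact hnores s hs ⟨1, by push_cast; linarith⟩
  -- monotonicity of deriv f
  have hmono : StrictMonoOn (deriv f) (Set.Icc p q) :=
    strictMonoOn_of_deriv_pos (convex_Icc _ _) hdf.continuousOn
      (by rw [interior_Icc]; exact hconv)
  have hanti : StrictAntiOn (deriv f) (Set.Icc r t) :=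
    strictAntiOn_of_deriv_neg (convex_Icc _ _) hdf.continuousOn
      (by rw [interior_Icc]; exact hconc)
  -- slope point
  have hvalp : f p = C₂ * η * p := hlin p ⟨hp0.le, le_refl p⟩
  obtain ⟨ξ, hξ, hξd⟩ :=
    exists_deriv_eq_slope f hpt hcont.continuousOn hdiff.differentiableOn
  have hslope_big : 4 * π < deriv f ξ := by
    rw [hξd, hval, hvalp, htp, lt_div_iff₀ hp0]
    have h1 : π * p ≤ π * (ρ / C₁) := mul_le_mul_of_nonneg_left hdivle hπ.le
    have h2 : C₂ * η * p < 4 * π * p := by nlinarith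
    have h3 : 0 < π * p := mul_pos hπ hp0
    have h4 : 30 * π * ρ / C₁ = 30 * (π * (ρ / C₁)) := by ring
    linarith [h4 ▸ le_refl (30 * π * ρ / C₁)]
  -- deriv f r > 4π
  have hfr_ne : deriv f r ≠ 4 * π := hnores' r ⟨hqr.le, le_refl r⟩
  have hfr : 4 * π < deriv f r := by
    rcases lt_or_ge r ξ with hc | hc
    · have := hanti ⟨le_refl r, hrt.le⟩ ⟨hc.le, hξ.2.le⟩ hc
      linarith
    · by_contra hle
      push_neg at hle
      have hlt' : deriv f r < 4 * π := lt_of_le_of_ne hle hfr_ne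
      obtain ⟨u, hu_mem, hu⟩ : ∃ u, u ∈ Set.Icc q r ∧ 4 * π < deriv f u := by
        rcases le_or_gt q ξ with h | h
        · exact ⟨ξ, ⟨h, hc⟩, hslope_big⟩
        · refine ⟨q, ⟨le_refl q, hqr.le⟩, ?_⟩
          have := hmono ⟨hξ.1.le, h.le⟩ ⟨hpq.le, le_refl q⟩ h
          linarith
      obtain ⟨c, hc_mem, hc_eq⟩ := intermediate_value_Icc' hu_mem.2 hdf.continuousOn
        (Set.mem_Icc.mpr ⟨hlt'.le, hu.le⟩)
      exact hnores' c ⟨le_trans hu_mem.1 hc_mem.1, hc_mem.2⟩ hc_eq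
  -- existence of ℓa
  have hft : deriv f t < 4 * π := hlt t (le_refl t)
  obtain ⟨ℓa, hℓ_mem, hℓ_eq⟩ := intermediate_value_Ioo' hrt.le hdf.continuousOn
    (Set.mem_Ioo.mpr ⟨hft, hfr⟩)
  have hℓr : r < ℓa := hℓ_mem.1
  have hℓt : ℓa < t := hℓ_mem.2
  have hℓ0 : 0 < ℓa := hr0.trans hℓr
  have hℓ2 : deriv (deriv f) ℓa < 0 := hconc ℓa hℓ_mem
  -- value bound
  obtain ⟨c, hc_mem, hc_eq⟩ :=
    exists_deriv_eq_slope f hℓt hcont.continuousOn hdiff.differentiableOn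
  have hc_lt : deriv f c < 4 * π := by
    have := hanti ⟨hℓr.le, hℓt.le⟩ ⟨(hℓr.trans hc_mem.1).le, hc_mem.2.le⟩ hc_mem.1
    rwa [hℓ_eq] at this
  have hc_pos : 0 < deriv f c := hf' c (hℓ0.trans hc_mem.1).le
  have hdiffp : f t - f ℓa = deriv f c * (t - ℓa) := by
    rw [hc_eq, div_mul_cancel₀ _ (sub_pos.mpr hℓt).ne']
  have hfl_lt : f ℓa < f t := by nlinarith
  have hbound : 30 * π * ρ / C₁ - 4 * π * ρ / (3 * C₂) ≤ f ℓa := by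
    have e1 : deriv f c * (t - ℓa) ≤ 4 * π * (t - ℓa) :=
      mul_le_mul_of_nonneg_right hc_lt.le (by linarith)
    have e2 : 4 * π * (t - ℓa) ≤ 4 * π * (t - r) :=
      mul_le_mul_of_nonneg_left (by linarith) (by positivity)
    have e3 : 4 * π * (t - r) = 4 * π * ρ / (3 * C₂) := by
      rw [ht, hr]; field_simp; ring
    rw [hval] at hdiffp
    linarith
  refine ⟨ℓa, ⟨hℓ0, hℓ_eq, hℓ2⟩, ?_, hℓr, hℓt, hbound, ?_, ?_⟩
  · intro ℓ h0 h1 h2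
    rcases le_or_gt ℓ p with h | h
    · exfalso; rw [hderiv_lin ℓ ⟨h0.le, h⟩] at h1; linarith
    rcases lt_or_ge ℓ q with h' | h'
    · exact absurd h2 (not_lt.mpr (hconv ℓ ⟨h, h'⟩).le)
    rcases le_or_gt ℓ r with h'' | h''
    · exact absurd h1 (hnores' ℓ ⟨h', h''⟩)
    rcases lt_or_ge ℓ t with h3 | h3
    · exact hanti.injOn ⟨h''.le, h3.le⟩ ⟨hℓr.le, hℓt.le⟩ (h1.trans hℓ_eq.symm)
    · exact absurd h1 (ne_of_lt (hlt ℓ h3))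
  · have : f ℓa < 30 * π * ρ / C₁ := hval ▸ hfl_lt
    nlinarith
  · have e1 : π * ℓa < π * t := mul_lt_mul_of_pos_left hℓt hπ
    have e2 : π * p ≤ π * (ρ / C₁) := mul_le_mul_of_nonneg_left hdivle hπ.le
    have e3 : 4 * π * ρ / (3 * C₂) ≤ 4 * π * ρ / (3 * C₁) := by
      apply div_le_div_of_nonneg_left (by positivity) (by positivity)
      linarith
    have e4 : π * t = 2 * (π * p) := by rw [ht, hp]; ring
    have e5 : 30 * π * ρ / C₁ = 30 * (π * (ρ / C₁)) := by ring
    have e6 : 20 * π * ρ / C₁ = 20 * (π * (ρ / C₁)) := by ring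
    have e7 : 4 * π * ρ / (3 * C₁) = (4 / 3) * (π * (ρ / C₁)) := by ring
    linarith
end
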